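/- Elliptic–parabolic–hyperbolic trichotomy for SU(1,2): let A ∈ M₃(ℂ) satisfy Aᴴ * J * A = J and det A = 1, and suppose A has no nonzero eigenvector v with Re(B(v,v)) < 0 (i.e. A is not elliptic). Then (a) A has a nonzero eigenvector v with B(v,v) = 0, and (b) A does not have three pairwise linearly independent eigenvectors v₁, v₂, v₃ all satisfying B(vᵢ,vᵢ) = 0; that is, a non-elliptic element has at least one and at most two fixed points on the boundary sphere. -/

import Mathlib

open Matrix

namespace SU12

open Complex ComplexConjugate

noncomputable section

def J : Matrix (Fin 3) (Fin 3) ℂ := Matrix.diagonal ![-1, 1, 1]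
def B (v w : Fin 3 → ℂ) : ℂ := star v ⬝ᵥ J.mulVec w

lemma B_def (v w : Fin 3 → ℂ) :
    star v ⬝ᵥ (Matrix.diagonal ![-1, 1, 1]).mulVec w = B v w := rfl

lemma B_expand (v w : Fin 3 → ℂ) :
    B v w = -(conj (v 0) * w 0) + conj (v 1) * w 1 + conj (v 2) * w 2 := by
  simp [B, J, dotProduct, Matrix.mulVec_diagonal, Fin.sum_univ_three, Complex.star_def]

lemma B_conj (v w : Fin 3 → ℂ) : conj (B v w) = B w v := by
  simp only [B_expand, map_add, map_neg, _root_.map_mul, Complex.conj_conj]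
  ring

lemma B_self_im (v : Fin 3 → ℂ) : (B v v).im = 0 :=
  Complex.conj_eq_iff_im.mp (B_conj v v)

lemma B_add_right (v x y : Fin 3 → ℂ) : B v (x + y) = B v x + B v y := by
  unfold B; rw [mulVec_add, dotProduct_add]

lemma B_smul_right (v x : Fin 3 → ℂ) (c : ℂ) : B v (c • x) = c * B v x := by
  unfold B; rw [mulVec_smul, dotProduct_smul, smul_eq_mul]

lemma B_add_left (x y v : Fin 3 → ℂ) : B (x + y) v = B x v + B y v := by
  unfold B; rw [star_add, add_dotProduct]

lemma B_smul_left (x v : Fin 3 → ℂ) (c : ℂ) : B (c • x) v = conj c * B x v := by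
  unfold B; rw [star_smul, smul_dotProduct]; rfl

lemma B_zero_right (v : Fin 3 → ℂ) : B v 0 = 0 := by
  unfold B; rw [mulVec_zero, dotProduct_zero]

def phi (v : Fin 3 → ℂ) : (Fin 3 → ℂ) →ₗ[ℂ] ℂ where
  toFun z := B v z
  map_add' x y := B_add_right v x y
  map_smul' c x := B_smul_right v x c

lemma self_mul_conj_eq_zero {a : ℂ} (h : a * conj a = 0) : a = 0 := by
  rw [Complex.mul_conj] at h
  exact normSq_eq_zero.mp (by exact_mod_cast h)

variable {A : Matrix (Fin 3) (Fin 3) ℂ}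

lemma B_inv (hA : Aᴴ * J * A = J) (v w : Fin 3 → ℂ) :
    B (A.mulVec v) (A.mulVec w) = B v w := by
  unfold B
  rw [star_mulVec, mulVec_mulVec, dotProduct_mulVec, vecMul_vecMul,
    ← Matrix.mul_assoc, hA, ← dotProduct_mulVec]

lemma eigOrth (hA : Aᴴ * J * A = J) {v w : Fin 3 → ℂ} {l m : ℂ}
    (hv : A.mulVec v = l • v) (hw : A.mulVec w = m • w) :
    B v w = conj l * m * B v w := by
  conv_lhs => rw [← B_inv hA v w, hv, hw]
  rw [B_smul_right, B_smul_left]; ring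

lemma eig_ne_zero (hdet : A.det = 1) {v : Fin 3 → ℂ} {l : ℂ}
    (hv : A.mulVec v = l • v) (hv0 : v ≠ 0) : l ≠ 0 := by
  intro hl
  apply hv0
  have hinv : A⁻¹ * A = 1 := Matrix.nonsing_inv_mul A (by simp [hdet])
  have h2 : A⁻¹.mulVec (A.mulVec v) = v := by rw [mulVec_mulVec, hinv, one_mulVec]
  rw [hv, hl, zero_smul, mulVec_zero] at h2
  exact h2.symm

lemma orth_inv (hA : Aᴴ * J * A = J) {v z : Fin 3 → ℂ} {l : ℂ}
    (hv : A.mulVec v = l • v) (hl : l ≠ 0) (hz : B v z = 0) : B v (A.mulVec z) = 0 := by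
  have h1 : v = l⁻¹ • A.mulVec v := by rw [hv, smul_smul, inv_mul_cancel₀ hl, one_smul]
  calc B v (A.mulVec z) = B (l⁻¹ • A.mulVec v) (A.mulVec z) := by rw [← h1]
    _ = conj l⁻¹ * B (A.mulVec v) (A.mulVec z) := B_smul_left _ _ _
    _ = conj l⁻¹ * B v z := by rw [B_inv hA]
    _ = 0 := by rw [hz, mul_zero]

/-- A pair of vectors related by a scalar is not linearly independent. -/
lemma not_li_right {x y : Fin 3 → ℂ} {c : ℂ} (h : y = c • x) :
    ¬ LinearIndependent ℂ ![x, y] := by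
  intro hli
  rw [Fintype.linearIndependent_iff] at hli
  have h0 := hli ![c, -1] (by
    rw [Fin.sum_univ_two]
    simp [h]) 1
  simp at h0

lemma not_li_left {x y : Fin 3 → ℂ} {c : ℂ} (h : x = c • y) :
    ¬ LinearIndependent ℂ ![x, y] := by
  intro hli
  rw [Fintype.linearIndependent_iff] at hli
  have h0 := hli ![-1, c] (by
    rw [Fin.sum_univ_two]
    simp [h]) 0
  simp at h0

lemma restricted_eigenvector (hA : Aᴴ * J * A = J) (hdet : A.det = 1)
    {v : Fin 3 → ℂ} {l : ℂ} (hv : A.mulVec v = l • v) (hv0 : v ≠ 0) :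
    ∃ (w : Fin 3 → ℂ) (m : ℂ), w ≠ 0 ∧ A.mulVec w = m • w ∧ B v w = 0 := by
  have hl := eig_ne_zero hdet hv hv0
  have hmap : ∀ x ∈ LinearMap.ker (phi v),
      (Matrix.mulVecLin A) x ∈ LinearMap.ker (phi v) := by
    intro x hx
    have hx' : B v x = 0 := LinearMap.mem_ker.mp hx
    have : B v (A.mulVec x) = 0 := orth_inv hA hv hl hx'
    simpa [LinearMap.mem_ker, Matrix.mulVecLin_apply, phi] using this
  have hrank : 1 ≤ Module.finrank ℂ (LinearMap.ker (phi v)) := by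
    have h3 : Module.finrank ℂ (Fin 3 → ℂ) = 3 := by simp
    have hrn := LinearMap.finrank_range_add_finrank_ker (phi v)
    have hr : Module.finrank ℂ (LinearMap.range (phi v)) ≤ 1 := by
      simpa using (LinearMap.range (phi v)).finrank_le
    omega
  haveI : Nontrivial (LinearMap.ker (phi v)) :=
    Module.nontrivial_of_finrank_pos (R := ℂ) (by omega)
  obtain ⟨m, hm⟩ := Module.End.exists_eigenvalue ((Matrix.mulVecLin A).restrict hmap)
  obtain ⟨⟨w, hwW⟩, hw⟩ := hm.exists_hasEigenvector
  have happ := hw.apply_eq_smul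
  have hne : w ≠ 0 := by
    intro h; exact hw.2 (by simp [Subtype.ext_iff, h])
  refine ⟨w, m, hne, ?_, LinearMap.mem_ker.mp hwW⟩
  have h2 := congrArg Subtype.val happ
  simpa [LinearMap.restrict_apply, Matrix.mulVecLin_apply] using h2

/-- Two B-orthogonal null vectors are proportional. -/
lemma null_orth {x y : Fin 3 → ℂ} (hx0 : x ≠ 0)
    (hxx : B x x = 0) (hyy : B y y = 0) (hxy : B x y = 0) :
    ∃ c : ℂ, y = c • x := by
  rw [B_expand] at hxx hyy hxy
  have e1 : conj (x 0) * x 0 = conj (x 1) * x 1 + conj (x 2) * x 2 := by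
    linear_combination -hxx
  have e2 : conj (y 0) * y 0 = conj (y 1) * y 1 + conj (y 2) * y 2 := by
    linear_combination -hyy
  have e3 : conj (x 0) * y 0 = conj (x 1) * y 1 + conj (x 2) * y 2 := by
    linear_combination -hxy
  have e4 : x 0 * conj (y 0) = x 1 * conj (y 1) + x 2 * conj (y 2) := by
    have h := congrArg conj e3
    simp only [map_add, _root_.map_mul, Complex.conj_conj] at h
    linear_combination h
  have hx0ne : x 0 ≠ 0 := by
    intro h0
    have hc : (normSq (x 1) : ℂ) + (normSq (x 2) : ℂ) = 0 := by
      rw [normSq_eq_conj_mul_self, normSq_eq_conj_mul_self, ← e1, h0]; ring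
    have hre : normSq (x 1) + normSq (x 2) = 0 := by exact_mod_cast hc
    have hn1 := normSq_nonneg (x 1); have hn2 := normSq_nonneg (x 2)
    have h1 : x 1 = 0 := normSq_eq_zero.mp (by linarith)
    have h2 : x 2 = 0 := normSq_eq_zero.mp (by linarith)
    exact hx0 (by funext i; fin_cases i <;> simp [h0, h1, h2])
  have hX : (x 1 * y 2 - x 2 * y 1) * conj (x 1 * y 2 - x 2 * y 1) = 0 := by
    rw [map_sub, _root_.map_mul, _root_.map_mul]
    linear_combination (-(conj (y 1) * y 1 + conj (y 2) * y 2)) * e1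
      + (-(conj (x 0) * x 0)) * e2 + (x 1 * conj (y 1) + x 2 * conj (y 2)) * e3
      + (conj (x 0) * y 0) * e4
  have hX0 : x 1 * y 2 = x 2 * y 1 := by
    have := self_mul_conj_eq_zero hX; linear_combination this
  have hX0c : conj (x 1) * conj (y 2) = conj (x 2) * conj (y 1) := by
    have h := congrArg conj hX0
    simp only [_root_.map_mul] at h; exact h
  have hZ1 : (x 0 * y 1 - y 0 * x 1) * conj (x 0 * y 1 - y 0 * x 1) = 0 := by
    rw [map_sub, _root_.map_mul, _root_.map_mul]
    linear_combination (conj (y 1) * y 1) * e1 + (x 1 * conj (x 1)) * e2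
      - (x 1 * conj (y 1)) * e3 - (conj (x 1) * y 1) * e4
      + (conj (x 1) * conj (y 2) - conj (x 2) * conj (y 1)) * hX0
  have hZ2 : (x 0 * y 2 - y 0 * x 2) * conj (x 0 * y 2 - y 0 * x 2) = 0 := by
    rw [map_sub, _root_.map_mul, _root_.map_mul]
    linear_combination (conj (y 2) * y 2) * e1 + (x 2 * conj (x 2)) * e2
      - (x 2 * conj (y 2)) * e3 - (conj (x 2) * y 2) * e4
      + (conj (x 1) * conj (y 2) - conj (x 2) * conj (y 1)) * hX0
  have h1 : x 0 * y 1 = y 0 * x 1 := by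
    have := self_mul_conj_eq_zero hZ1; linear_combination this
  have h2 : x 0 * y 2 = y 0 * x 2 := by
    have := self_mul_conj_eq_zero hZ2; linear_combination this
  refine ⟨y 0 / x 0, ?_⟩
  funext i
  fin_cases i
  · show y 0 = y 0 / x 0 * x 0
    field_simp
  · show y 1 = y 0 / x 0 * x 1
    field_simp; linear_combination h1
  · show y 2 = y 0 / x 0 * x 2
    field_simp; linear_combination h2

/-- Two positive orthogonal eigenvectors give a negative eigenvector. -/
lemma neg_eigenvector (hA : Aᴴ * J * A = J) (hdet : A.det = 1)
    {v w : Fin 3 → ℂ} {l m : ℂ}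
    (hv : A.mulVec v = l • v) (hw : A.mulVec w = m • w)
    (hv0 : v ≠ 0) (hw0 : w ≠ 0)
    (hp : 0 < (B v v).re) (hq : 0 < (B w w).re) (hvw : B v w = 0) :
    ∃ (u : Fin 3 → ℂ) (c : ℂ), u ≠ 0 ∧ A.mulVec u = c • u ∧ (B u u).re < 0 := by
  have hl := eig_ne_zero hdet hv hv0
  have hm := eig_ne_zero hdet hw hw0
  have hpne : B v v ≠ 0 := fun h => by rw [h] at hp; simp at hp
  have hqne : B w w ≠ 0 := fun h => by rw [h] at hq; simp at hq
  have hwv : B w v = 0 := by rw [← B_conj, hvw, map_zero]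
  set psi := (phi v).prod (phi w) with hpsi
  -- nonzero kernel element
  haveI : Nontrivial (LinearMap.ker psi) := by
    apply Module.nontrivial_of_finrank_pos (R := ℂ)
    have h3 : Module.finrank ℂ (Fin 3 → ℂ) = 3 := by simp
    have hrn := LinearMap.finrank_range_add_finrank_ker psi
    have hr : Module.finrank ℂ (LinearMap.range psi) ≤ 2 := by
      have := (LinearMap.range psi).finrank_le
      simpa using this
    omega
  obtain ⟨u0, hu0ne⟩ := exists_ne (0 : LinearMap.ker psi)
  obtain ⟨u, hu⟩ := u0
  have hune : u ≠ 0 := by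
    intro h; exact hu0ne (by simp [Subtype.ext_iff, h])
  have huv : B v u = 0 := by
    have := (LinearMap.mem_ker.mp hu)
    have h1 := congrArg Prod.fst this
    simpa [psi, phi] using h1
  have huw : B w u = 0 := by
    have h1 := congrArg Prod.snd (LinearMap.mem_ker.mp hu)
    simpa [psi, phi] using h1
  have hvu : B u v = 0 := by rw [← B_conj, huv, map_zero]
  have hwu : B u w = 0 := by rw [← B_conj, huw, map_zero]
  -- linear independence of v, w, u
  have hli : LinearIndependent ℂ ![v, w, u] := by
    rw [Fintype.linearIndependent_iff]
    intro g hg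
    have hsum : g 0 • v + g 1 • w + g 2 • u = 0 := by
      have := hg
      simpa [Fin.sum_univ_three] using this
    have h0 : g 0 = 0 := by
      have := congrArg (fun z => B v z) hsum
      simp only [B_add_right, B_smul_right, B_zero_right] at this
      rw [hvw, huv] at this
      have : g 0 * B v v = 0 := by linear_combination this
      exact (mul_eq_zero.mp this).resolve_right hpne
    have h1 : g 1 = 0 := by
      have := congrArg (fun z => B w z) hsum
      simp only [B_add_right, B_smul_right, B_zero_right] at this
      rw [hwv, huw] at this
      have : g 1 * B w w = 0 := by linear_combination this
      exact (mul_eq_zero.mp this).resolve_right hqne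
    have h2 : g 2 = 0 := by
      rw [h0, h1] at hsum
      simp only [zero_smul, zero_add] at hsum
      rcases smul_eq_zero.mp hsum with h | h
      · exact h
      · exact absurd h hune
    intro i; fin_cases i <;> assumption
  have hcard : Fintype.card (Fin 3) = Module.finrank ℂ (Fin 3 → ℂ) := by simp
  let bas : Module.Basis (Fin 3) ℂ (Fin 3 → ℂ) := basisOfLinearIndependentOfCardEqFinrank hli hcard
  have hbas : ∀ i, bas i = ![v, w, u] i := by
    intro i; rw [coe_basisOfLinearIndependentOfCardEqFinrank]
  -- every vector in the kernel is a multiple of u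
  have hker : ∀ z, B v z = 0 → B w z = 0 → ∃ c : ℂ, z = c • u := by
    intro z hz1 hz2
    have hrepr := bas.sum_repr z
    set r : Fin 3 → ℂ := fun i => bas.repr z i with hr
    have hzeq : r 0 • v + r 1 • w + r 2 • u = z := by
      have := hrepr
      rw [Fin.sum_univ_three] at this
      rw [hbas 0, hbas 1, hbas 2] at this
      simpa using this
    have h0 : r 0 = 0 := by
      have h := congrArg (fun z' => B v z') hzeq.symm
      simp only [B_add_right, B_smul_right] at h
      rw [hvw, huv, hz1] at h
      have : r 0 * B v v = 0 := by linear_combination -h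
      exact (mul_eq_zero.mp this).resolve_right hpne
    have h1 : r 1 = 0 := by
      have h := congrArg (fun z' => B w z') hzeq.symm
      simp only [B_add_right, B_smul_right] at h
      rw [hwv, huw, hz2] at h
      have : r 1 * B w w = 0 := by linear_combination -h
      exact (mul_eq_zero.mp this).resolve_right hqne
    refine ⟨r 2, ?_⟩
    rw [← hzeq, h0, h1]; simp
  -- u is an eigenvector
  have hAu : ∃ c : ℂ, A.mulVec u = c • u := by
    apply hker
    · exact orth_inv hA hv hl huv
    · exact orth_inv hA hw hm huw
  obtain ⟨c, hc⟩ := hAu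
  refine ⟨u, c, hune, hc, ?_⟩
  -- B u u has negative real part: expand e₀ in the basis
  set e0 : Fin 3 → ℂ := ![1, 0, 0] with he0
  have hBe0 : B e0 e0 = -1 := by
    rw [B_expand]; simp [he0]
  have hrepr := bas.sum_repr e0
  set r : Fin 3 → ℂ := fun i => bas.repr e0 i with hr
  have hzeq : r 0 • v + r 1 • w + r 2 • u = e0 := by
    have := hrepr
    rw [Fin.sum_univ_three] at this
    rw [hbas 0, hbas 1, hbas 2] at this
    simpa using this
  have hexp : B e0 e0 = conj (r 0) * r 0 * B v v + conj (r 1) * r 1 * B w w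
      + conj (r 2) * r 2 * B u u := by
    rw [← hzeq]
    simp only [B_add_left, B_add_right, B_smul_left, B_smul_right,
      hvw, hwv, huv, huw, hvu, hwu]
    ring
  have h1 : (-1 : ℂ) = (normSq (r 0) : ℂ) * B v v + (normSq (r 1) : ℂ) * B w w
      + (normSq (r 2) : ℂ) * B u u := by
    rw [normSq_eq_conj_mul_self, normSq_eq_conj_mul_self, normSq_eq_conj_mul_self]
    rw [← hBe0, hexp]
  have hre : (-1 : ℝ) = normSq (r 0) * (B v v).re + normSq (r 1) * (B w w).re
      + normSq (r 2) * (B u u).re := by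
    have h2 := congrArg Complex.re h1
    simpa [Complex.add_re, Complex.re_ofReal_mul] using h2
  by_contra hcon
  push_neg at hcon
  nlinarith [normSq_nonneg (r 0), normSq_nonneg (r 1), normSq_nonneg (r 2),
    mul_nonneg (normSq_nonneg (r 0)) hp.le, mul_nonneg (normSq_nonneg (r 1)) hq.le,
    mul_nonneg (normSq_nonneg (r 2)) hcon]

end

end SU12

open SU12 Complex ComplexConjugate in
/-- Elliptic–parabolic–hyperbolic trichotomy for SU(1,2): a non-elliptic element
has at least one eigenvector on the boundary sphere, and does not have three
pairwise linearly independent eigenvectors on the boundary sphere. -/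
theorem su12_non_elliptic_boundary_fixed_points
    (A : Matrix (Fin 3) (Fin 3) ℂ)
    (hA : Aᴴ * Matrix.diagonal ![-1, 1, 1] * A = Matrix.diagonal ![-1, 1, 1])
    (hdet : A.det = 1)
    (hnotelliptic : ¬ ∃ (v : Fin 3 → ℂ) (l : ℂ), v ≠ 0 ∧ A.mulVec v = l • v ∧
      (star v ⬝ᵥ (Matrix.diagonal ![-1, 1, 1]).mulVec v).re < 0) :
    (∃ (v : Fin 3 → ℂ) (l : ℂ), v ≠ 0 ∧ A.mulVec v = l • v ∧
      star v ⬝ᵥ (Matrix.diagonal ![-1, 1, 1]).mulVec v = 0) ∧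
    ¬ ∃ (v₁ v₂ v₃ : Fin 3 → ℂ) (l₁ l₂ l₃ : ℂ),
      A.mulVec v₁ = l₁ • v₁ ∧ A.mulVec v₂ = l₂ • v₂ ∧ A.mulVec v₃ = l₃ • v₃ ∧
      LinearIndependent ℂ ![v₁, v₂] ∧ LinearIndependent ℂ ![v₂, v₃] ∧
      LinearIndependent ℂ ![v₁, v₃] ∧
      star v₁ ⬝ᵥ (Matrix.diagonal ![-1, 1, 1]).mulVec v₁ = 0 ∧
      star v₂ ⬝ᵥ (Matrix.diagonal ![-1, 1, 1]).mulVec v₂ = 0 ∧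
      star v₃ ⬝ᵥ (Matrix.diagonal ![-1, 1, 1]).mulVec v₃ = 0 := by
  have hA' : Aᴴ * SU12.J * A = SU12.J := hA
  have hNE : ¬ ∃ (v : Fin 3 → ℂ) (l : ℂ), v ≠ 0 ∧ A.mulVec v = l • v ∧
      (B v v).re < 0 := by
    rintro ⟨v, l, h0, h1, h2⟩
    exact hnotelliptic ⟨v, l, h0, h1, by rw [B_def]; exact h2⟩
  -- a vector with nonzero B-norm and no negative eigenvector has positive B-norm
  have hpos : ∀ (v : Fin 3 → ℂ) (l : ℂ), v ≠ 0 → A.mulVec v = l • v →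
      B v v ≠ 0 → 0 < (B v v).re := by
    intro v l hv0 hv hne
    rcases lt_trichotomy ((B v v).re) 0 with h | h | h
    · exact absurd ⟨v, l, hv0, hv, h⟩ hNE
    · exact absurd (Complex.ext h (B_self_im v)) hne
    · exact h
  constructor
  · -- existence of a boundary eigenvector
    obtain ⟨l, hl⟩ := Module.End.exists_eigenvalue (Matrix.mulVecLin A)
    obtain ⟨v, hv⟩ := hl.exists_hasEigenvector
    have hv0 : v ≠ 0 := hv.2
    have hAv : A.mulVec v = l • v := by
      have := hv.apply_eq_smul
      simpa [Matrix.mulVecLin_apply] using this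
    by_cases hB : B v v = 0
    · exact ⟨v, l, hv0, hAv, by rw [B_def]; exact hB⟩
    have hp := hpos v l hv0 hAv hB
    obtain ⟨w, m, hw0, hAw, hvw⟩ := restricted_eigenvector hA' hdet hAv hv0
    by_cases hBw : B w w = 0
    · exact ⟨w, m, hw0, hAw, by rw [B_def]; exact hBw⟩
    have hq := hpos w m hw0 hAw hBw
    obtain ⟨u, c, hu0, hAu, hlt⟩ :=
      neg_eigenvector hA' hdet hAv hAw hv0 hw0 hp hq hvw
    exact absurd ⟨u, c, hu0, hAu, hlt⟩ hNE
  · -- at most two boundary eigenvectors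
    rintro ⟨v₁, v₂, v₃, l₁, l₂, l₃, h1, h2, h3, h12, h23, h13, n1, n2, n3⟩
    rw [B_def] at n1 n2 n3
    have hv1 : v₁ ≠ 0 := by
      have := h12.ne_zero 0; simpa using this
    have hv2 : v₂ ≠ 0 := by
      have := h12.ne_zero 1; simpa using this
    have hb12 : B v₁ v₂ ≠ 0 := by
      intro h
      obtain ⟨c, hc⟩ := null_orth hv1 n1 n2 h
      exact not_li_right hc h12
    have hb13 : B v₁ v₃ ≠ 0 := by
      intro h
      obtain ⟨c, hc⟩ := null_orth hv1 n1 n3 h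
      exact not_li_right hc h13
    have hb23 : B v₂ v₃ ≠ 0 := by
      intro h
      obtain ⟨c, hc⟩ := null_orth hv2 n2 n3 h
      exact not_li_right hc h23
    -- eigenvalue relations
    have E12 : conj l₁ * l₂ = 1 := by
      have h := eigOrth hA' h1 h2
      have := mul_right_cancel₀ hb12 (by linear_combination -h : conj l₁ * l₂ * B v₁ v₂ = 1 * B v₁ v₂)
      exact this
    have E13 : conj l₁ * l₃ = 1 := by
      have h := eigOrth hA' h1 h3
      exact mul_right_cancel₀ hb13 (by linear_combination -h : conj l₁ * l₃ * B v₁ v₃ = 1 * B v₁ v₃)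
    have E23 : conj l₂ * l₃ = 1 := by
      have h := eigOrth hA' h2 h3
      exact mul_right_cancel₀ hb23 (by linear_combination -h : conj l₂ * l₃ * B v₂ v₃ = 1 * B v₂ v₃)
    have hl3 : l₃ ≠ 0 := by
      intro h; rw [h, mul_zero] at E13; exact one_ne_zero E13.symm
    have hll : l₁ = l₂ := by
      have : conj l₁ = conj l₂ := mul_right_cancel₀ hl3 (E13.trans E23.symm)
      have := congrArg conj this
      simpa using this
    -- the vector v₁ - conj (B v₁ v₂) • v₂ is a negative eigenvector
    set b := B v₁ v₂ with hb
    set z : Fin 3 → ℂ := v₁ + (-(conj b)) • v₂ with hz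
    have hz0 : z ≠ 0 := by
      intro h
      have : v₁ = conj b • v₂ := by
        have h' : v₁ + (-(conj b)) • v₂ = 0 := h
        funext i
        have := congrFun h' i
        simp only [Pi.add_apply, Pi.smul_apply, smul_eq_mul, Pi.zero_apply] at this
        simp only [Pi.smul_apply, smul_eq_mul]
        linear_combination this
      exact not_li_left this h12
    have hAz : A.mulVec z = l₁ • z := by
      rw [hz, mulVec_add, mulVec_smul, h1, h2, ← hll]
      rw [smul_add, smul_smul, smul_smul]
      ring_nf
    have hBzz : (B z z).re < 0 := by
      have hexp : B z z = -(2 * (normSq b : ℂ)) := by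
        rw [hz]
        simp only [B_add_left, B_add_right, B_smul_left, B_smul_right]
        rw [n1, n2, ← hb, ← B_conj v₁ v₂, ← hb]
        rw [normSq_eq_conj_mul_self]
        simp only [map_neg, Complex.conj_conj]
        ring
      rw [hexp]
      simp only [Complex.neg_re, Complex.re_ofReal_mul]
      have : 0 < normSq b := normSq_pos.mpr hb12
      have h2r : (2 * (normSq b : ℂ)).re = 2 * normSq b := by
        simp [Complex.ofReal_mul]
      rw [h2r]
      linarith
    exact hNE ⟨z, l₁, hz0, hAz, hBzz⟩
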